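/- Disjoint crooked planes are uniformly separated: if C(u,p) and C(u',p') are crooked planes in Minkowski space E with C(u,p) ∩ C(u',p') = ∅, then the Euclidean distance between them is strictly positive, i.e. inf{ρ(x,y) : x ∈ C(u,p), y ∈ C(u',p')} > 0. -/

import Mathlib

noncomputable section

open Set

/-- The underlying vector space ℝ^{2,1} of Minkowski (2+1)-space `E`. -/
abbrev V : Type := Fin 3 → ℝ

/-- The Lorentzian inner product `B` of signature (2,1). -/
def mB (u v : V) : ℝ := u 0 * v 0 + u 1 * v 1 - u 2 * v 2

def Timelike (v : V) : Prop := mB v v < 0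

def UnitSpacelike (v : V) : Prop := mB v v = 1

/-- future-pointing timelike vector. -/
def FutureTimelike (v : V) : Prop := mB v v < 0 ∧ 0 < v 2

/-- The standard Euclidean norm on ℝ³. -/
def eunorm (v : V) : ℝ := Real.sqrt (v 0 ^ 2 + v 1 ^ 2 + v 2 ^ 2)

/-- The Euclidean distance ρ. -/
def ρ (p q : V) : ℝ := eunorm (p - q)

/-- Open Euclidean ball `B(x,δ)`. -/
def eball (x : V) (δ : ℝ) : Set V := {y | ρ x y < δ}

/-- Euclidean δ-neighborhood `B(S,δ)` of a set `S`. -/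
def nbhd (S : Set V) (δ : ℝ) : Set V := {y | ∃ x ∈ S, ρ x y < δ}

/-- Membership in SO⁰(2,1): a linear isometry of `B` preserving orientation
(det = 1) and time-orientation (the future cone); this characterizes the
identity component of the group of linear isometries of `B`. -/
def InSO (g : V ≃ₗ[ℝ] V) : Prop :=
  (∀ u v : V, mB (g u) (g v) = mB u v) ∧
  LinearMap.det g.toLinearMap = 1 ∧
  ∀ v : V, FutureTimelike v → FutureTimelike (g v)

/-- Membership in Isom⁰(E) = SO⁰(2,1) ⋉ ℝ³. -/
def InIsom (φ : V ≃ᵃ[ℝ] V) : Prop := InSO φ.linear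

/-- The point `u_φ = (cos φ, sin φ, 1)` on the circle S¹ of future-pointing null vectors. -/
def uph (φ : ℝ) : V := ![Real.cos φ, Real.sin φ, 1]

/-- The circle S¹ of future-pointing null vectors. -/
def circ : Set V := {u | ∃ φ : ℝ, u = uph φ}

/-- An interval (arc) `{u_φ : φ₁ < φ < φ₂}` on S¹. -/
def arc (φ₁ φ₂ : ℝ) : Set V := {u | ∃ φ : ℝ, φ₁ < φ ∧ φ < φ₂ ∧ u = uph φ}

/-- Radial projection of a future-pointing null vector back onto S¹ (divide by third
coordinate); `u ↦ nproj (g u)` is the induced action `P(g)` of `g` on S¹. -/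
def nproj (w : V) : V := (w 2)⁻¹ • w

/-- `(a,b,c)` is a positively oriented basis of ℝ³. -/
def PosOriented (a b c : V) : Prop := 0 < Matrix.det (Matrix.of ![a, b, c])

/-- `xm = x⁻(v)`, `xp = x⁺(v)`: the two points of S¹ which are B-orthogonal to the
unit-spacelike vector `v`, labeled so that `(x⁻(v), x⁺(v), v)` is positively oriented. -/
def IsNullFrame (v xm xp : V) : Prop :=
  xm ∈ circ ∧ xp ∈ circ ∧ mB xm v = 0 ∧ mB xp v = 0 ∧ xm ≠ xp ∧ PosOriented xm xp v

/-- Eigendata of a hyperbolic element of SO⁰(2,1): `xm = x⁻(g)` and `xp = x⁺(g)` are the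
eigenvectors on S¹ with eigenvalues `lam < 1 < lam⁻¹`. -/
def IsHypData (g : V ≃ₗ[ℝ] V) (lam : ℝ) (xm xp : V) : Prop :=
  0 < lam ∧ lam < 1 ∧ xm ∈ circ ∧ xp ∈ circ ∧ g xm = lam • xm ∧ g xp = lam⁻¹ • xp

/-- `g` is hyperbolic: it has eigenvalues `lam < 1 < lam⁻¹` with null eigenvectors on S¹. -/
def IsHyperbolic (g : V ≃ₗ[ℝ] V) : Prop := ∃ lam xm xp, IsHypData g lam xm xp

/-- `g` is ε-hyperbolic: it is hyperbolic and `ρ(x⁺(g), x⁻(g)) ≥ ε`. -/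
def EpsHyperbolic (g : V ≃ₗ[ℝ] V) (ε : ℝ) : Prop :=
  ∃ lam xm xp, IsHypData g lam xm xp ∧ ε ≤ ρ xp xm

/-- Hyperbolic 2-space H² (hyperboloid model: the set of future unit timelike vectors,
the canonical section of the set of timelike lines). -/
def Hyp : Set V := {v | mB v v = -1 ∧ 0 < v 2}

/-- The origin `O ∈ H²`. -/
def Opt : V := ![0, 0, 1]

/-- Hyperbolic distance on H² (arcosh of |B(x,y)| for normalized x, y). -/
def hdist (x y : V) : ℝ := Real.log (|mB x y| + Real.sqrt (mB x y ^ 2 - 1))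

/-- The half-plane `H_v ⊂ H²` determined by a unit-spacelike vector `v`. -/
def halfPlane (v : V) : Set V := {u | u ∈ Hyp ∧ 0 < mB u v}

/-- The geodesic `l_v ⊂ H²` determined by a unit-spacelike vector `v`. -/
def geo (v : V) : Set V := {u | u ∈ Hyp ∧ mB u v = 0}

/-- The crooked plane `C₀` with vertex the origin directed by `e₁ = (1,0,0)`. -/
def C0 : Set V :=
  {u | u 0 = 0 ∧ |u 1| ≤ |u 2|} ∪
  {u | u 0 ≤ 0 ∧ u 1 = u 2} ∪
  {u | 0 ≤ u 0 ∧ u 1 = -u 2}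

/-- The open crooked half-space `H₀` bounded by `C₀`. -/
def H0 : Set V :=
  {u | 0 < u 0 ∧ 0 < u 1 + u 2} ∪
  {u | u 0 = 0 ∧ 0 < u 1 + u 2 ∧ 0 < u 2 - u 1} ∪
  {u | u 0 < 0 ∧ 0 < u 2 - u 1}

/-- `S` is a crooked plane `C(u,p) = p + g(C₀)` for some `g ∈ SO⁰(2,1)`. -/
def IsCrookedPlane (S : Set V) : Prop :=
  ∃ (g : V ≃ₗ[ℝ] V) (p : V), InSO g ∧ S = (fun x => p + g x) '' C0

/-- `H` is a crooked half-space `H(u,p) = p + g(H₀)` for some `g ∈ SO⁰(2,1)`. -/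
def IsCrookedHalfSpace (H : Set V) : Prop :=
  ∃ (g : V ≃ₗ[ℝ] V) (p : V), InSO g ∧ H = (fun x => p + g x) '' H0

/-- Signed generator: `g^+ = g`, `g^- = g⁻¹` (Bool `true` = `+`, `false` = `−`). -/
def sgen {G : Type*} [Group G] (g : G) (j : Bool) : G := if j then g else g⁻¹

/-- A word `w 0, …, w l` in the letters `(i,j)` (meaning `h_i^j`) is reduced:
`(i_{k+1}, j_{k+1}) ≠ (i_k, −j_k)` for all `k < l`. -/
def ReducedWord {m : ℕ} (l : ℕ) (w : ℕ → Fin m × Bool) : Prop :=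
  ∀ k, k < l → ¬((w (k + 1)).1 = (w k).1 ∧ (w (k + 1)).2 = !(w k).2)

/-- An affine Schottky configuration. -/
structure AffSchottky (m : ℕ) where
  hm : 2 ≤ m
  h : Fin m → V ≃ᵃ[ℝ] V
  hIsom : ∀ i, InIsom (h i)
  H : Fin m → Bool → Set V
  hCrooked : ∀ i j, IsCrookedHalfSpace (H i j)
  hDisj : ∀ i j i' j', (i, j) ≠ (i', j') → Disjoint (H i j) (H i' j')
  hPair : ∀ i, ⇑(h i) '' H i false = (closure (H i true))ᶜ

namespace AffSchottky

variable {m : ℕ} (S : AffSchottky m)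

/-- The crooked polyhedron `X = E − ⋃ closure(H_i^j)`. -/
def X : Set V := (⋃ i, ⋃ j, closure (S.H i j))ᶜ

/-- The affine Schottky group Γ generated by `h₁, …, h_m`. -/
def Γ : Subgroup (V ≃ᵃ[ℝ] V) := Subgroup.closure (Set.range S.h)

/-- The signed generators `h_i^j`. -/
def hp (i : Fin m) (j : Bool) : V ≃ᵃ[ℝ] V := sgen (S.h i) j

/-- `wprod w k = h_{i₀}^{j₀} ⋯ h_{i_{k-1}}^{j_{k-1}}` where `w t = (i_t, j_t)`. -/
def wprod (w : ℕ → Fin m × Bool) (k : ℕ) : V ≃ᵃ[ℝ] V :=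
  ((List.range k).map fun t => S.hp (w t).1 (w t).2).prod

end AffSchottky

/-- A (linear) Schottky configuration. -/
structure LinSchottky (m : ℕ) where
  hm : 2 ≤ m
  g : Fin m → V ≃ₗ[ℝ] V
  hSO : ∀ i, InSO (g i)
  a : Fin m → Bool → ℝ
  b : Fin m → Bool → ℝ
  hab : ∀ i j, a i j < b i j ∧ b i j - a i j < 2 * Real.pi
  hDisjCl : ∀ i j i' j', (i, j) ≠ (i', j') →
    Disjoint (closure (arc (a i j) (b i j))) (closure (arc (a i' j') (b i' j')))
  hPair : ∀ i, (fun u => nproj (g i u)) '' arc (a i false) (b i false) =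
    circ \ closure (arc (a i true) (b i true))
  hPairInv : ∀ i, (fun u => nproj ((g i)⁻¹ u)) '' arc (a i true) (b i true) =
    circ \ closure (arc (a i false) (b i false))

namespace LinSchottky

variable {m : ℕ} (S : LinSchottky m)

/-- The intervals `A_i^j ⊂ S¹`. -/
def A (i : Fin m) (j : Bool) : Set V := arc (S.a i j) (S.b i j)

/-- The Schottky group `G` generated by `g₁, …, g_m`. -/
def G : Subgroup (V ≃ₗ[ℝ] V) := Subgroup.closure (Set.range S.g)

/-- The signed generators `g_i^j`. -/
def gp (i : Fin m) (j : Bool) : V ≃ₗ[ℝ] V := sgen (S.g i) j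

/-- `wprod w k = g_{i₀}^{j₀} ⋯ g_{i_{k-1}}^{j_{k-1}}` where `w t = (i_t, j_t)`. -/
def wprod (w : ℕ → Fin m × Bool) (k : ℕ) : V ≃ₗ[ℝ] V :=
  ((List.range k).map fun t => S.gp (w t).1 (w t).2).prod

end LinSchottky

/-- Given directing unit-spacelike vectors `v i j` of the half-planes `H_i^j`, the
fundamental polygon `Δ = H² − ⋃ closure(H_i^j)` (closures taken in H²). -/
def linΔ {m : ℕ} (v : Fin m → Bool → V) : Set V :=
  Hyp \ ⋃ i, ⋃ j, Hyp ∩ closure (halfPlane (v i j))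


def coneSet {n : ℕ} (v : Fin n → V) : Set V :=
  {x | ∃ c : Fin n → ℝ, (∀ i, 0 ≤ c i) ∧ x = ∑ i, c i • v i}

lemma cone_carath {n : ℕ} (v : Fin n → V) :
    ∀ (N : ℕ) (c : Fin n → ℝ), (Finset.univ.filter (fun i => c i ≠ 0)).card ≤ N →
      (∀ i, 0 ≤ c i) →
      ∃ c' : Fin n → ℝ, (∀ i, 0 ≤ c' i) ∧ (∑ i, c' i • v i = ∑ i, c i • v i) ∧
        LinearIndependent ℝ (fun i : {i // c' i ≠ 0} => v i) := by
  intro N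
  induction N with
  | zero =>
    intro c hcard hc
    refine ⟨c, hc, rfl, ?_⟩
    haveI : IsEmpty {i // c i ≠ 0} := by
      constructor
      rintro ⟨i, hi⟩
      have : i ∈ Finset.univ.filter (fun i => c i ≠ 0) := by simp [hi]
      have := Finset.card_eq_zero.mp (Nat.le_zero.mp hcard)
      simp [this] at *
    exact linearIndependent_empty_type
  | succ N ih =>
    intro c hcard hc
    by_cases hli : LinearIndependent ℝ (fun i : {i // c i ≠ 0} => v i)
    · exact ⟨c, hc, rfl, hli⟩
    · rw [Fintype.linearIndependent_iff] at hli
      push_neg at hli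
      obtain ⟨g, hgsum, i₀, hgi₀⟩ := hli
      -- extend g to μ on Fin n
      set μ : Fin n → ℝ := fun i => if h : c i ≠ 0 then g ⟨i, h⟩ else 0 with hμ
      have hμsupp : ∀ i, c i = 0 → μ i = 0 := by
        intro i h; simp [hμ, h]
      have hμsum : ∑ i, μ i • v i = 0 := by
        calc ∑ i, μ i • v i
            = ∑ i ∈ Finset.univ.filter (fun i => c i ≠ 0), μ i • v i := by
              symm
              apply Finset.sum_filter_of_ne
              intro i _ h
              by_contra hci
              rw [hμsupp i hci] at h
              simp at h
          _ = ∑ i : {i // c i ≠ 0}, μ i.1 • v i.1 :=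
              Finset.sum_subtype _ (by simp) _
          _ = ∑ i : {i // c i ≠ 0}, g i • v i.1 := by
              apply Finset.sum_congr rfl
              rintro ⟨i, hi⟩ _
              simp [hμ, hi]
          _ = 0 := hgsum
      have hμi₀ : μ i₀.1 = g i₀ := by simp [hμ, i₀.2]
      -- make sure there is a positive entry: use ν = μ or -μ
      obtain ⟨ν, hνsupp, hνsum, i₀', hνi₀⟩ :
          ∃ ν : Fin n → ℝ, (∀ i, c i = 0 → ν i = 0) ∧ (∑ i, ν i • v i = 0) ∧
            ∃ i, 0 < ν i := by
        rcases lt_or_gt_of_ne (show μ i₀.1 ≠ 0 by rw [hμi₀]; exact hgi₀) with h | h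
        · exact ⟨-μ, fun i hi => by simp [hμsupp i hi],
            by simpa [neg_smul] using congrArg Neg.neg hμsum, i₀.1, by simpa using h⟩
        · exact ⟨μ, hμsupp, hμsum, i₀.1, h⟩
      set T : Finset (Fin n) := Finset.univ.filter (fun i => 0 < ν i) with hT
      have hTne : T.Nonempty := ⟨i₀', by simp [hT, hνi₀]⟩
      obtain ⟨i₁, hi₁T, hi₁min⟩ := T.exists_min_image (fun i => c i / ν i) hTne
      have hνi₁ : 0 < ν i₁ := by simpa [hT] using hi₁T
      set t : ℝ := c i₁ / ν i₁ with ht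
      have ht0 : 0 ≤ t := div_nonneg (hc i₁) hνi₁.le
      set c' : Fin n → ℝ := fun i => c i - t * ν i with hc'
      have hc'nonneg : ∀ i, 0 ≤ c' i := by
        intro i
        rcases le_or_gt (ν i) 0 with h | h
        · have : t * ν i ≤ 0 := mul_nonpos_of_nonneg_of_nonpos ht0 h
          simp only [hc']; linarith [hc i]
        · have hiT : i ∈ T := by simp [hT, h]
          have := hi₁min i hiT
          have : t * ν i ≤ c i := by
            rw [ht]
            calc c i₁ / ν i₁ * ν i ≤ c i / ν i * ν i := by
                  apply mul_le_mul_of_nonneg_right this h.le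
              _ = c i := by field_simp
          simp only [hc']; linarith
      have hc'i₁ : c' i₁ = 0 := by
        simp only [hc', ht]; field_simp; ring
      have hc'supp : ∀ i, c i = 0 → c' i = 0 := by
        intro i hi; simp only [hc', hνsupp i hi, hi]; ring
      have hsum' : ∑ i, c' i • v i = ∑ i, c i • v i := by
        simp only [hc', sub_smul, mul_smul, Finset.sum_sub_distrib]
        rw [← Finset.smul_sum, hνsum, smul_zero, sub_zero]
      have hcard' : (Finset.univ.filter (fun i => c' i ≠ 0)).card ≤ N := by
        have hsub : Finset.univ.filter (fun i => c' i ≠ 0) ⊆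
            (Finset.univ.filter (fun i => c i ≠ 0)).erase i₁ := by
          intro i hi
          simp only [Finset.mem_filter, Finset.mem_erase, Finset.mem_univ, true_and] at hi ⊢
          refine ⟨?_, ?_⟩
          · rintro rfl; exact hi hc'i₁
          · intro h; exact hi (hc'supp i h)
        have hi₁mem : i₁ ∈ Finset.univ.filter (fun i => c i ≠ 0) := by
          simp only [Finset.mem_filter, Finset.mem_univ, true_and]
          intro h
          exact absurd (hνsupp i₁ h) hνi₁.ne'
        calc (Finset.univ.filter (fun i => c' i ≠ 0)).card
            ≤ ((Finset.univ.filter (fun i => c i ≠ 0)).erase i₁).card :=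
              Finset.card_le_card hsub
          _ = (Finset.univ.filter (fun i => c i ≠ 0)).card - 1 :=
              Finset.card_erase_of_mem hi₁mem
          _ ≤ N := by omega
      obtain ⟨c'', h1, h2, h3⟩ := ih c' hcard' hc'nonneg
      exact ⟨c'', h1, h2.trans hsum', h3⟩

lemma isClosed_coneSet {n : ℕ} (v : Fin n → V) : IsClosed (coneSet v) := by
  classical
  -- pieces indexed by finsets with linearly independent image
  let K : Finset (Fin n) → Set V := fun s =>
    {x | ∃ c : Fin n → ℝ, (∀ i, 0 ≤ c i) ∧ (∀ i, i ∉ s → c i = 0) ∧ x = ∑ i, c i • v i}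
  have hdecomp : coneSet v =
      ⋃ s : {s : Finset (Fin n) // LinearIndependent ℝ (fun i : s => v i)}, K s.1 := by
    ext x
    constructor
    · rintro ⟨c, hc, rfl⟩
      obtain ⟨c', h1, h2, h3⟩ := cone_carath v
        ((Finset.univ.filter (fun i => c i ≠ 0)).card) c le_rfl hc
      refine Set.mem_iUnion.mpr ⟨⟨Finset.univ.filter (fun i => c' i ≠ 0), ?_⟩,
        ⟨c', h1, ?_, h2.symm⟩⟩
      · exact (linearIndependent_equiv
          (Equiv.subtypeEquivRight
            (p := fun i => i ∈ Finset.univ.filter (fun j => c' j ≠ 0))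
            (q := fun i => c' i ≠ 0)
            (fun i => by simp))).mpr h3
      · intro i hi
        by_contra h
        exact hi (by simpa using h)
    · rintro hx
      obtain ⟨s, c, hc, _, rfl⟩ := Set.mem_iUnion.mp hx
      exact ⟨c, hc, rfl⟩
  rw [hdecomp]
  apply isClosed_iUnion_of_finite
  rintro ⟨s, hs⟩
  -- K s is image of nonneg orthant under injective linear map
  let f : ({i // i ∈ s} → ℝ) →ₗ[ℝ] V :=
    { toFun := fun c => ∑ i : s, c i • v i.1
      map_add' := by intro a b; simp [add_smul, Finset.sum_add_distrib]
      map_smul' := by intro r a; simp [mul_smul, Finset.smul_sum] }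
  have hinj : LinearMap.ker f = ⊥ := by
    rw [LinearMap.ker_eq_bot']
    intro d hd
    have := Fintype.linearIndependent_iff.mp hs d hd
    funext i; exact this i
  have hfimg : K s = f '' {c | ∀ i, 0 ≤ c i} := by
    ext x
    constructor
    · rintro ⟨c, hc, hsupp, rfl⟩
      refine ⟨fun i => c i.1, fun i => hc i.1, ?_⟩
      show ∑ i : s, c i.1 • v i.1 = ∑ i, c i • v i
      rw [Finset.sum_coe_sort s (fun i => c i • v i)]
      apply Finset.sum_subset (Finset.subset_univ s)
      intro i _ hi
      rw [hsupp i hi, zero_smul]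
    · rintro ⟨d, hd, rfl⟩
      refine ⟨fun i => if h : i ∈ s then d ⟨i, h⟩ else 0, ?_, ?_, ?_⟩
      · intro i
        by_cases h : i ∈ s
        · simpa [h] using hd ⟨i, h⟩
        · simp [h]
      · intro i hi; simp [hi]
      · show f d = _
        have : ∀ i ∈ s, (if h : i ∈ s then d ⟨i, h⟩ else 0) • v i =
            (fun i => if h : i ∈ s then d ⟨i, h⟩ else (0:ℝ)) i • v i := fun _ _ => rfl
        rw [show (∑ i, (if h : i ∈ s then d ⟨i, h⟩ else (0:ℝ)) • v i) =
            ∑ i ∈ s, (if h : i ∈ s then d ⟨i, h⟩ else (0:ℝ)) • v i from by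
          symm
          apply Finset.sum_subset (Finset.subset_univ s)
          intro i _ hi
          simp [hi]]
        rw [← Finset.sum_coe_sort s (fun i => (if h : i ∈ s then d ⟨i, h⟩ else (0:ℝ)) • v i)]
        apply Finset.sum_congr rfl
        rintro ⟨i, hi⟩ _
        simp [hi]
  rw [hfimg]
  have hclosed : IsClosed {c : {i // i ∈ s} → ℝ | ∀ i, 0 ≤ c i} := by
    have : {c : {i // i ∈ s} → ℝ | ∀ i, 0 ≤ c i} = ⋂ i, {c | 0 ≤ c i} := by
      ext c; simp [Set.mem_iInter]
    rw [this]
    exact isClosed_iInter fun i => isClosed_le continuous_const (continuous_apply i)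
  exact (LinearMap.isClosedEmbedding_of_injective hinj).isClosedMap _ hclosed

def Wgen : Fin 4 → Fin 3 → V :=
  ![![![0,1,1], ![0,-1,1], ![0,0,0]],
    ![![0,1,-1], ![0,-1,-1], ![0,0,0]],
    ![![-1,0,0], ![0,1,1], ![0,-1,-1]],
    ![![1,0,0], ![0,1,-1], ![0,-1,1]]]

lemma C0_decomp : C0 = ⋃ k : Fin 4, coneSet (Wgen k) := by
  ext x
  simp only [Set.mem_iUnion]
  constructor
  · rintro ((⟨h0, h1⟩ | ⟨h0, h1⟩) | ⟨h0, h1⟩)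
    · rcases le_or_gt 0 (x 2) with h2 | h2
      · rw [abs_of_nonneg h2] at h1
        have := abs_le.mp h1
        refine ⟨0, ![(x 2 + x 1)/2, (x 2 - x 1)/2, 0], ?_, ?_⟩
        · intro i; fin_cases i <;> simp <;> linarith [this.1, this.2]
        · funext j
          simp only [Fin.sum_univ_three, Wgen]
          fin_cases j <;> simp [Pi.add_apply, Pi.smul_apply] <;> linarith
      · rw [abs_of_neg h2] at h1
        have := abs_le.mp h1
        refine ⟨1, ![(-x 2 + x 1)/2, (-x 2 - x 1)/2, 0], ?_, ?_⟩
        · intro i; fin_cases i <;> simp <;> linarith [this.1, this.2]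
        · funext j
          simp only [Fin.sum_univ_three, Wgen]
          fin_cases j <;> simp [Pi.add_apply, Pi.smul_apply] <;> linarith
    · rcases le_or_gt 0 (x 1) with h2 | h2
      · refine ⟨2, ![-x 0, x 1, 0], ?_, ?_⟩
        · intro i; fin_cases i <;> simp <;> linarith
        · funext j
          simp only [Fin.sum_univ_three, Wgen]
          fin_cases j <;> simp [Pi.add_apply, Pi.smul_apply] <;> linarith
      · refine ⟨2, ![-x 0, 0, -x 1], ?_, ?_⟩
        · intro i; fin_cases i <;> simp <;> linarith
        · funext j
          simp only [Fin.sum_univ_three, Wgen]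
          fin_cases j <;> simp [Pi.add_apply, Pi.smul_apply] <;> linarith
    · rcases le_or_gt 0 (x 1) with h2 | h2
      · refine ⟨3, ![x 0, x 1, 0], ?_, ?_⟩
        · intro i; fin_cases i <;> simp <;> linarith
        · funext j
          simp only [Fin.sum_univ_three, Wgen]
          fin_cases j <;> simp [Pi.add_apply, Pi.smul_apply] <;> linarith
      · refine ⟨3, ![x 0, 0, -x 1], ?_, ?_⟩
        · intro i; fin_cases i <;> simp <;> linarith
        · funext j
          simp only [Fin.sum_univ_three, Wgen]
          fin_cases j <;> simp [Pi.add_apply, Pi.smul_apply] <;> linarith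
  · rintro ⟨k, c, hc, rfl⟩
    have h0 := hc 0; have h1 := hc 1; have h2 := hc 2
    fin_cases k
    · have key : ∑ i, c i • Wgen 0 i = ![0, c 0 - c 1, c 0 + c 1] := by
        funext j
        simp only [Fin.sum_univ_three, Wgen]
        fin_cases j <;> simp [Pi.add_apply, Pi.smul_apply] <;> ring
      rw [show ((fun i => i) (⟨0, by norm_num⟩ : Fin 4)) = (0 : Fin 4) from rfl, key]
      left; left
      refine ⟨by simp, ?_⟩
      have e1 : (![0, c 0 - c 1, c 0 + c 1] : V) 1 = c 0 - c 1 := by simp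
      have e2 : (![0, c 0 - c 1, c 0 + c 1] : V) 2 = c 0 + c 1 := by simp
      rw [e1, e2, abs_of_nonneg (by linarith : (0:ℝ) ≤ c 0 + c 1)]
      exact abs_le.mpr ⟨by linarith, by linarith⟩
    · have key : ∑ i, c i • Wgen 1 i = ![0, c 0 - c 1, -(c 0 + c 1)] := by
        funext j
        simp only [Fin.sum_univ_three, Wgen]
        fin_cases j <;> simp [Pi.add_apply, Pi.smul_apply] <;> ring
      rw [show ((fun i => i) (⟨1, by norm_num⟩ : Fin 4)) = (1 : Fin 4) from rfl, key]
      left; left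
      refine ⟨by simp, ?_⟩
      have e1 : (![0, c 0 - c 1, -(c 0 + c 1)] : V) 1 = c 0 - c 1 := by simp
      have e2 : (![0, c 0 - c 1, -(c 0 + c 1)] : V) 2 = -(c 0 + c 1) := by simp
      rw [e1, e2, abs_neg, abs_of_nonneg (by linarith : (0:ℝ) ≤ c 0 + c 1)]
      exact abs_le.mpr ⟨by linarith, by linarith⟩
    · have key : ∑ i, c i • Wgen 2 i = ![-c 0, c 1 - c 2, c 1 - c 2] := by
        funext j
        simp only [Fin.sum_univ_three, Wgen]
        fin_cases j <;> simp [Pi.add_apply, Pi.smul_apply] <;> ring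
      rw [show ((fun i => i) (⟨2, by norm_num⟩ : Fin 4)) = (2 : Fin 4) from rfl, key]
      left; right
      exact ⟨by simp; linarith, by simp⟩
    · have key : ∑ i, c i • Wgen 3 i = ![c 0, c 1 - c 2, -(c 1 - c 2)] := by
        funext j
        simp only [Fin.sum_univ_three, Wgen]
        fin_cases j <;> simp [Pi.add_apply, Pi.smul_apply] <;> ring
      rw [show ((fun i => i) (⟨3, by norm_num⟩ : Fin 4)) = (3 : Fin 4) from rfl, key]
      right
      exact ⟨by simp; linarith, by simp⟩

lemma mem_coneSet_add {m n : ℕ} {a : Fin m → V} {b : Fin n → V} {x y : V}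
    (hx : x ∈ coneSet a) (hy : y ∈ coneSet b) : x + y ∈ coneSet (Fin.append a b) := by
  obtain ⟨ca, hca, rfl⟩ := hx
  obtain ⟨cb, hcb, rfl⟩ := hy
  refine ⟨Fin.append ca cb, ?_, ?_⟩
  · intro i
    refine Fin.addCases (fun i => ?_) (fun i => ?_) i
    · rw [Fin.append_left]; exact hca i
    · rw [Fin.append_right]; exact hcb i
  · rw [Fin.sum_univ_add (f := fun i => Fin.append ca cb i • Fin.append a b i)]
    congr 1 <;> apply Finset.sum_congr rfl <;> intro i _ <;>
      simp [Fin.append_left, Fin.append_right]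

lemma coneSet_add_mem {m n : ℕ} {a : Fin m → V} {b : Fin n → V} {z : V}
    (hz : z ∈ coneSet (Fin.append a b)) :
    ∃ x ∈ coneSet a, ∃ y ∈ coneSet b, z = x + y := by
  obtain ⟨c, hc, rfl⟩ := hz
  refine ⟨∑ i, c (Fin.castAdd n i) • a i, ⟨fun i => c (Fin.castAdd n i), fun i => hc _, rfl⟩,
    ∑ i, c (Fin.natAdd m i) • b i, ⟨fun i => c (Fin.natAdd m i), fun i => hc _, rfl⟩, ?_⟩
  rw [Fin.sum_univ_add (f := fun i => c i • Fin.append a b i)]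
  congr 1 <;> apply Finset.sum_congr rfl <;> intro i _ <;>
    simp [Fin.append_left, Fin.append_right]

lemma mem_coneSet_map {n : ℕ} (g : V ≃ₗ[ℝ] V) {w : Fin n → V} {x : V}
    (hx : x ∈ coneSet w) : g x ∈ coneSet (fun i => g (w i)) := by
  obtain ⟨c, hc, rfl⟩ := hx
  exact ⟨c, hc, by simp [map_sum, map_smul]⟩

lemma mem_coneSet_neg {n : ℕ} {w : Fin n → V} {x : V}
    (hx : x ∈ coneSet w) : -x ∈ coneSet (fun i => -(w i)) := by
  obtain ⟨c, hc, rfl⟩ := hx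
  exact ⟨c, hc, by simp [smul_neg, Finset.sum_neg_distrib]⟩

lemma coneSet_map_mem {n : ℕ} (g : V ≃ₗ[ℝ] V) {w : Fin n → V} {x : V}
    (hx : x ∈ coneSet (fun i => g (w i))) : ∃ y ∈ coneSet w, x = g y := by
  obtain ⟨c, hc, rfl⟩ := hx
  exact ⟨∑ i, c i • w i, ⟨c, hc, rfl⟩, by simp [map_sum, map_smul]⟩

lemma coneSet_neg_mem {n : ℕ} {w : Fin n → V} {x : V}
    (hx : x ∈ coneSet (fun i => -(w i))) : ∃ y ∈ coneSet w, x = -y := by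
  obtain ⟨c, hc, rfl⟩ := hx
  exact ⟨∑ i, c i • w i, ⟨c, hc, rfl⟩, by simp [smul_neg, Finset.sum_neg_distrib]⟩

lemma norm_le_eunorm (v : V) : ‖v‖ ≤ eunorm v := by
  have h0 : 0 ≤ eunorm v := Real.sqrt_nonneg _
  rw [pi_norm_le_iff_of_nonneg h0]
  intro i
  rw [Real.norm_eq_abs, ← Real.sqrt_sq_eq_abs]
  apply Real.sqrt_le_sqrt
  have e0 : v 0 ^ 2 ≤ v 0 ^ 2 + v 1 ^ 2 + v 2 ^ 2 := by nlinarith [sq_nonneg (v 1), sq_nonneg (v 2)]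
  have e1 : v 1 ^ 2 ≤ v 0 ^ 2 + v 1 ^ 2 + v 2 ^ 2 := by nlinarith [sq_nonneg (v 0), sq_nonneg (v 2)]
  have e2 : v 2 ^ 2 ≤ v 0 ^ 2 + v 1 ^ 2 + v 2 ^ 2 := by nlinarith [sq_nonneg (v 0), sq_nonneg (v 1)]
  fin_cases i
  · exact e0
  · exact e1
  · exact e2

set_option maxHeartbeats 1000000 in
/-- disjoint crooked planes are uniformly separated: the Euclidean distance
between them is strictly positive. -/
theorem stmt19 (S T : Set V) (hS : IsCrookedPlane S) (hT : IsCrookedPlane T)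
    (hdisj : Disjoint S T) :
    ∃ d : ℝ, 0 < d ∧ ∀ x ∈ S, ∀ y ∈ T, d ≤ ρ x y := by
  obtain ⟨g, p, -, rfl⟩ := hS
  obtain ⟨g', q, -, rfl⟩ := hT
  set U : Set V := ⋃ k : Fin 4, ⋃ l : Fin 4,
    coneSet (Fin.append (fun i => g (Wgen k i)) (fun i => -(g' (Wgen l i)))) with hU
  have hUclosed : IsClosed U :=
    isClosed_iUnion_of_finite fun k => isClosed_iUnion_of_finite fun l => isClosed_coneSet _
  set D : Set V := (fun z => (p - q) + z) '' U with hD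
  have hDclosed : IsClosed D := (Homeomorph.addLeft (p - q)).isClosedMap _ hUclosed
  have h0D : (0 : V) ∉ D := by
    rintro ⟨u, hu, h0⟩
    simp only [hU, Set.mem_iUnion] at hu
    obtain ⟨k, l, hu⟩ := hu
    obtain ⟨xa, hxa, yb, hyb, rfl⟩ := coneSet_add_mem hu
    obtain ⟨a, ha, rfl⟩ := coneSet_map_mem g hxa
    obtain ⟨nb, hnb, rfl⟩ := coneSet_neg_mem hyb
    obtain ⟨b, hb, rfl⟩ := coneSet_map_mem g' hnb
    have haC : a ∈ C0 := by rw [C0_decomp]; exact Set.mem_iUnion.mpr ⟨k, ha⟩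
    have hbC : b ∈ C0 := by rw [C0_decomp]; exact Set.mem_iUnion.mpr ⟨l, hb⟩
    have hx : p + g a ∈ (fun x => p + g x) '' C0 := ⟨a, haC, rfl⟩
    have heq : p + g a = q + g' b := by
      have h0' : (p - q) + (g a + -(g' b)) = 0 := h0
      have : (p + g a) - (q + g' b) = (p - q) + (g a + -(g' b)) := by abel
      rw [h0'] at this
      exact sub_eq_zero.mp this
    have hy : p + g a ∈ (fun x => q + g' x) '' C0 := ⟨b, hbC, heq.symm⟩
    exact Set.disjoint_left.mp hdisj hx hy
  obtain ⟨ε, hε, hball⟩ := Metric.isOpen_iff.mp hDclosed.isOpen_compl 0 h0D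
  refine ⟨ε, hε, ?_⟩
  rintro x ⟨a, haC, rfl⟩ y ⟨b, hbC, rfl⟩
  have hmem : (p + g a) - (q + g' b) ∈ D := by
    rw [C0_decomp] at haC hbC
    obtain ⟨k, ha⟩ := Set.mem_iUnion.mp haC
    obtain ⟨l, hb⟩ := Set.mem_iUnion.mp hbC
    exact ⟨g a + -(g' b), by
      simp only [hU, Set.mem_iUnion]
      exact ⟨k, l, mem_coneSet_add (mem_coneSet_map g ha)
        (mem_coneSet_neg (mem_coneSet_map g' hb))⟩, by abel⟩
  have hnot : (p + g a) - (q + g' b) ∉ Metric.ball (0:V) ε := fun h => (hball h) hmem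
  rw [Metric.mem_ball, dist_zero_right] at hnot
  push_neg at hnot
  calc ε ≤ ‖(p + g a) - (q + g' b)‖ := hnot
    _ ≤ eunorm ((p + g a) - (q + g' b)) := norm_le_eunorm _
    _ = ρ (p + g a) (q + g' b) := rfl
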